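/- Let G be a connected undirected graph and s,t ∈ V. The bridge links e_1,…,e_r separating s from t decompose G into r+1 connected components C_1,…,C_{r+1} (after removing e_1,…,e_r), which can be ordered so that s ∈ C_1, t ∈ C_{r+1}, and each e_l joins a node of C_l to a node of C_{l+1}. Every s-t path traverses e_1,…,e_r in this order. -/

import Mathlib

open SimpleGraph

namespace Stmt5

variable {V : Type*} {G : SimpleGraph V} {s t : V}

lemma reach_cases {a b x y : V} (h : G.Reachable x y) :
    (G.deleteEdges {s(a,b)}).Reachable x y ∨
      ((G.deleteEdges {s(a,b)}).Reachable x a ∧ (G.deleteEdges {s(a,b)}).Reachable b y) ∨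
      ((G.deleteEdges {s(a,b)}).Reachable x b ∧ (G.deleteEdges {s(a,b)}).Reachable a y) := by
  obtain ⟨w⟩ := h
  induction w with
  | nil => exact Or.inl (Reachable.refl _)
  | cons h p ih =>
    rename_i x z y
    by_cases hf : s(x, z) = s(a, b)
    · rw [Sym2.eq_iff] at hf
      rcases hf with ⟨h1, h2⟩ | ⟨h1, h2⟩
      · subst h1; subst h2
        rcases ih with hr | ⟨h1, h2⟩ | ⟨h1, h2⟩
        · exact Or.inr (Or.inl ⟨Reachable.refl _, hr⟩)
        · exact Or.inl (h1.symm.trans h2)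
        · exact Or.inl h2
      · subst h1; subst h2
        rcases ih with hr | ⟨h1, h2⟩ | ⟨h1, h2⟩
        · exact Or.inr (Or.inr ⟨Reachable.refl _, hr⟩)
        · exact Or.inl h2
        · exact Or.inl (h1.symm.trans h2)
    · have hadj : (G.deleteEdges {s(a,b)}).Adj x z := by
        rw [SimpleGraph.deleteEdges_adj]; exact ⟨h, by simpa using hf⟩
      rcases ih with hr | ⟨h1, h2⟩ | ⟨h1, h2⟩
      · exact Or.inl (hadj.reachable.trans hr)
      · exact Or.inr (Or.inl ⟨hadj.reachable.trans h1, h2⟩)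
      · exact Or.inr (Or.inr ⟨hadj.reachable.trans h1, h2⟩)

/-- transfer a walk avoiding `f` into the deleted graph -/
lemma reach_of_not_mem_edges {f : Sym2 V} {x y : V} (w : G.Walk x y) (hf : f ∉ w.edges) :
    (G.deleteEdges {f}).Reachable x y := by
  refine (w.transfer _ ?_).reachable
  intro g hg
  rw [edgeSet_deleteEdges]
  exact ⟨w.edges_subset_edgeSet hg, by rintro rfl; exact hf hg⟩

lemma edge_mem_of_cross {f : Sym2 V} {x y : V} (w : G.Walk x y)
    (h : ¬ (G.deleteEdges {f}).Reachable x y) : f ∈ w.edges := by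
  by_contra hf
  exact h (reach_of_not_mem_edges w hf)

lemma not_reach_ends (hG : G.Connected) {a b : V}
    (hbr : ¬ (G.deleteEdges {s(a,b)}).Reachable s t) :
    ¬ (G.deleteEdges {s(a,b)}).Reachable a b := by
  intro hab
  rcases reach_cases (a := a) (b := b) (hG.preconnected s t) with h1 | ⟨h1, h2⟩ | ⟨h1, h2⟩
  · exact hbr h1
  · exact hbr (h1.trans (hab.trans h2))
  · exact hbr (h1.trans (hab.symm.trans h2))

lemma endpoint_split (hG : G.Connected) {x z : V} (hadj : G.Adj x z)
    (hbr : ¬ (G.deleteEdges {s(x,z)}).Reachable s t) :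
    ((G.deleteEdges {s(x,z)}).Reachable s x ∧ ¬ (G.deleteEdges {s(x,z)}).Reachable s z) ∨
      ((G.deleteEdges {s(x,z)}).Reachable s z ∧ ¬ (G.deleteEdges {s(x,z)}).Reachable s x) := by
  have hnot := not_reach_ends hG hbr
  have hone : (G.deleteEdges {s(x,z)}).Reachable s x ∨ (G.deleteEdges {s(x,z)}).Reachable s z := by
    rcases reach_cases (a := x) (b := z) (hG.preconnected s t) with h1 | ⟨h1, h2⟩ | ⟨h1, h2⟩
    · exact absurd h1 hbr
    · exact Or.inl h1
    · exact Or.inr h1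
  rcases hone with h | h
  · exact Or.inl ⟨h, fun h' => hnot (h.symm.trans h')⟩
  · exact Or.inr ⟨h, fun h' => hnot (h'.symm.trans h)⟩

lemma side_inv {f : Sym2 V} {x y : V} (hadj : G.Adj x y) (hne : s(x,y) ≠ f) :
    ((G.deleteEdges {f}).Reachable s x ↔ (G.deleteEdges {f}).Reachable s y) := by
  have h : (G.deleteEdges {f}).Adj x y := by
    rw [SimpleGraph.deleteEdges_adj]; exact ⟨hadj, by simpa using hne⟩
  exact ⟨fun h' => h'.trans h.reachable, fun h' => h'.trans h.symm.reachable⟩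


lemma reach_of_mem_support {H : SimpleGraph V} {x y z : V} (w : H.Walk x y)
    (h : z ∈ w.support) : H.Reachable x z := by
  classical
  exact (w.takeUntil z h).reachable

/-- a walk in `G \ f` avoiding `g` gives reachability in `G \ g` -/
lemma reach_del_of_del {f g : Sym2 V} {x y : V} (w : (G.deleteEdges {f}).Walk x y)
    (hg : g ∉ w.edges) : (G.deleteEdges {g}).Reachable x y := by
  refine (w.transfer (G.deleteEdges {g}) ?_).reachable
  intro e he
  have h1 := w.edges_subset_edgeSet he
  rw [edgeSet_deleteEdges] at h1 ⊢
  exact ⟨h1.1, by rintro rfl; exact hg he⟩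

lemma nesting_main (hG : G.Connected) {a b c d : V} (hfadj : G.Adj a b) (hgadj : G.Adj c d)
    (hfb : ¬ (G.deleteEdges {s(a,b)}).Reachable s t)
    (hgb : ¬ (G.deleteEdges {s(c,d)}).Reachable s t)
    (hne : s(a,b) ≠ s(c,d))
    (hb : ¬ (G.deleteEdges {s(a,b)}).Reachable s b)
    (hc : (G.deleteEdges {s(c,d)}).Reachable s c)
    (hd : ¬ (G.deleteEdges {s(c,d)}).Reachable s d) :
    (∀ v, (G.deleteEdges {s(a,b)}).Reachable s v → (G.deleteEdges {s(c,d)}).Reachable s v) ∨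
      (∀ v, (G.deleteEdges {s(c,d)}).Reachable s v →
        (G.deleteEdges {s(a,b)}).Reachable s v) := by
  have hsame : (G.deleteEdges {s(c,d)}).Reachable s a ↔
      (G.deleteEdges {s(c,d)}).Reachable s b := side_inv hfadj hne
  by_cases hbg : (G.deleteEdges {s(c,d)}).Reachable s b
  · left
    intro v hv
    by_contra hvg
    obtain ⟨w⟩ := hv
    have hgw : s(c,d) ∈ w.edges := by
      by_contra h; exact hvg (reach_del_of_del w h)
    have hds : (G.deleteEdges {s(a,b)}).Reachable s d :=
      reach_of_mem_support w (w.snd_mem_support_of_mem_edges hgw)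
    have hdt : (G.deleteEdges {s(c,d)}).Reachable d t := by
      rcases reach_cases (a := c) (b := d) (hG.preconnected d t) with h1 | ⟨h1, h2⟩ | ⟨h1, h2⟩
      · exact h1
      · exact absurd h1.symm (not_reach_ends hG hgb)
      · exact absurd (hc.trans h2) hgb
    obtain ⟨w2⟩ := hdt
    have hfw2 : s(a,b) ∉ w2.edges := by
      intro hmem
      have haw2 : (G.deleteEdges {s(c,d)}).Reachable d a :=
        reach_of_mem_support w2 (w2.fst_mem_support_of_mem_edges hmem)
      exact hd ((hsame.mpr hbg).trans haw2.symm)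
    exact hfb (hds.trans (reach_del_of_del w2 hfw2))
  · right
    intro v hv
    by_contra hvf
    obtain ⟨w⟩ := hv
    have hfw : s(a,b) ∈ w.edges := by
      by_contra h; exact hvf (reach_del_of_del w h)
    have has : (G.deleteEdges {s(c,d)}).Reachable s a :=
      reach_of_mem_support w (w.fst_mem_support_of_mem_edges hfw)
    exact hbg (hsame.mp has)

lemma nesting (hG : G.Connected) {f g : Sym2 V}
    (hfe : f ∈ G.edgeSet) (hfb : ¬ (G.deleteEdges {f}).Reachable s t)
    (hge : g ∈ G.edgeSet) (hgb : ¬ (G.deleteEdges {g}).Reachable s t)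
    (hne : f ≠ g) :
    (∀ v, (G.deleteEdges {f}).Reachable s v → (G.deleteEdges {g}).Reachable s v) ∨
      (∀ v, (G.deleteEdges {g}).Reachable s v → (G.deleteEdges {f}).Reachable s v) := by
  induction f using Sym2.ind with | _ a b => ?_
  induction g using Sym2.ind with | _ c d => ?_
  have hfadj : G.Adj a b := hfe
  have hgadj : G.Adj c d := hge
  rcases endpoint_split hG hfadj hfb with ⟨ha1, hb1⟩ | ⟨ha1, hb1⟩ <;>
    rcases endpoint_split hG hgadj hgb with ⟨hc1, hd1⟩ | ⟨hc1, hd1⟩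
  · exact nesting_main hG hfadj hgadj hfb hgb hne hb1 hc1 hd1
  · rw [show s(c,d) = s(d,c) from Sym2.eq_swap] at *
    exact nesting_main hG hfadj hgadj.symm hfb hgb hne hb1 hc1 hd1
  · rw [show s(a,b) = s(b,a) from Sym2.eq_swap] at *
    exact nesting_main hG hfadj.symm hgadj hfb hgb hne hb1 hc1 hd1
  · rw [show s(a,b) = s(b,a) from Sym2.eq_swap, show s(c,d) = s(d,c) from Sym2.eq_swap] at *
    exact nesting_main hG hfadj.symm hgadj.symm hfb hgb hne hb1 hc1 hd1


/-- choose endpoints of a bridge, `s`-side first -/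
lemma exists_endpoint_split (hG : G.Connected) {f : Sym2 V} (hfe : f ∈ G.edgeSet)
    (hfb : ¬ (G.deleteEdges {f}).Reachable s t) :
    ∃ a b, f = s(a,b) ∧ (G.deleteEdges {f}).Reachable s a ∧
      ¬ (G.deleteEdges {f}).Reachable s b := by
  induction f using Sym2.ind with | _ x z => ?_
  have hadj : G.Adj x z := hfe
  rcases endpoint_split hG hadj hfb with ⟨h1, h2⟩ | ⟨h1, h2⟩
  · exact ⟨x, z, rfl, h1, h2⟩
  · exact ⟨z, x, Sym2.eq_swap.symm, h1, h2⟩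

lemma bridge_ne (hG : G.Connected) {f g : Sym2 V}
    (hfe : f ∈ G.edgeSet) (hfb : ¬ (G.deleteEdges {f}).Reachable s t)
    (hne : f ≠ g)
    (heq : ∀ v, ((G.deleteEdges {f}).Reachable s v ↔ (G.deleteEdges {g}).Reachable s v)) :
    False := by
  obtain ⟨a, b, rfl, ha, hb⟩ := exists_endpoint_split hG hfe hfb
  have hadj : G.Adj a b := hfe
  have hsame : (G.deleteEdges {g}).Reachable s a ↔ (G.deleteEdges {g}).Reachable s b :=
    side_inv hadj hne
  exact hb ((heq b).mpr (hsame.mp ((heq a).mp ha)))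

lemma enumeration [Fintype V] (hG : G.Connected) (s t : V) :
    ∃ (r : ℕ) (e : Fin r → Sym2 V),
      Function.Injective e ∧
      (∀ i, e i ∈ G.edgeSet ∧ ¬ (G.deleteEdges {e i}).Reachable s t) ∧
      (∀ f, f ∈ G.edgeSet → ¬ (G.deleteEdges {f}).Reachable s t → ∃ i, e i = f) ∧
      (∀ i j : Fin _, i ≤ j → ∀ v, (G.deleteEdges {e i}).Reachable s v →
        (G.deleteEdges {e j}).Reachable s v) := by
  classical
  set Br : Set (Sym2 V) := {f | f ∈ G.edgeSet ∧ ¬ (G.deleteEdges {f}).Reachable s t} with hBr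
  let β := {f : Sym2 V // f ∈ Br}
  haveI : Fintype β := Fintype.ofFinite β
  let rel : β → β → Prop := fun f g =>
    ∀ v, (G.deleteEdges {f.1}).Reachable s v → (G.deleteEdges {g.1}).Reachable s v
  haveI : DecidableRel rel := Classical.decRel _
  haveI htrans : IsTrans β rel := ⟨fun f g h hfg hgh v hv => hgh v (hfg v hv)⟩
  haveI hanti : IsAntisymm β rel := by
    constructor
    intro f g hfg hgf
    by_contra hne
    have hne' : f.1 ≠ g.1 := fun h => hne (Subtype.ext h)
    exact bridge_ne hG f.2.1 f.2.2 hne' (fun v => ⟨hfg v, hgf v⟩)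
  haveI htot : IsTotal β rel := by
    constructor
    intro f g
    by_cases hne : f.1 = g.1
    · exact Or.inl (fun v hv => by rw [← hne]; exact hv)
    · exact nesting hG f.2.1 f.2.2 g.2.1 g.2.2 hne
  let l := Finset.sort Finset.univ rel
  refine ⟨l.length, fun i => (l.get i).1, ?_, ?_, ?_, ?_⟩
  · exact fun i j h => (Finset.sort_nodup Finset.univ rel).get_inj_iff.mp (Subtype.ext h)
  · exact fun i => (l.get i).2
  · intro f hfe hfb
    have : (⟨f, ⟨hfe, hfb⟩⟩ : β) ∈ l := (Finset.mem_sort rel).2 (Finset.mem_univ _)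
    obtain ⟨i, hi⟩ := List.mem_iff_get.1 this
    exact ⟨i, congrArg Subtype.val hi⟩
  · intro i j hij
    rcases eq_or_lt_of_le hij with h | h
    · subst h; exact fun v hv => hv
    · exact (Finset.pairwise_sort _ rel).rel_get_of_lt h


end Stmt5

/-- Decomposition D1: in a connected graph `G`, the bridge links `e_1, …, e_r`
separating `s` from `t` decompose `G` (after their removal) into exactly `r + 1`
connected components `C_1, …, C_{r+1}`, ordered so that `s ∈ C_1`, `t ∈ C_{r+1}`,
and each `e_l` joins a node of `C_l` to a node of `C_{l+1}`; moreover every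
`s`-`t` path traverses `e_1, …, e_r` in this order. -/
theorem stmt_5 {V : Type*} [Fintype V] (G : SimpleGraph V) (hG : G.Connected)
    (s t : V) :
    ∃ (r : ℕ) (e : Fin r → Sym2 V)
      (C : Fin (r + 1) →
        (G.deleteEdges
          {f : Sym2 V | f ∈ G.edgeSet ∧
            ¬ (G.deleteEdges {f}).Reachable s t}).ConnectedComponent),
      Function.Injective e ∧
      (∀ i, (e i) ∈ G.edgeSet ∧ ¬ (G.deleteEdges {e i}).Reachable s t) ∧
      (∀ f : Sym2 V, f ∈ G.edgeSet → ¬ (G.deleteEdges {f}).Reachable s t →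
        ∃ i, e i = f) ∧
      Function.Bijective C ∧
      (G.deleteEdges {f : Sym2 V | f ∈ G.edgeSet ∧
          ¬ (G.deleteEdges {f}).Reachable s t}).connectedComponentMk s = C 0 ∧
      (G.deleteEdges {f : Sym2 V | f ∈ G.edgeSet ∧
          ¬ (G.deleteEdges {f}).Reachable s t}).connectedComponentMk t = C (Fin.last r) ∧
      (∀ i : Fin r, ∃ u v : V, e i = Sym2.mk u v ∧
        (G.deleteEdges {f : Sym2 V | f ∈ G.edgeSet ∧
            ¬ (G.deleteEdges {f}).Reachable s t}).connectedComponentMk u = C i.castSucc ∧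
        (G.deleteEdges {f : Sym2 V | f ∈ G.edgeSet ∧
            ¬ (G.deleteEdges {f}).Reachable s t}).connectedComponentMk v = C i.succ) ∧
      (∀ p : G.Walk s t, (List.ofFn e).Sublist p.edges) := by
  classical
  obtain ⟨r, e, einj, emem, esurj, emono⟩ := Stmt5.enumeration hG s t
  set S : Set (Sym2 V) :=
    {f : Sym2 V | f ∈ G.edgeSet ∧ ¬ (G.deleteEdges {f}).Reachable s t} with hS
  set L : V → ℕ := fun v =>
    (Finset.univ.filter fun i : Fin r => ¬ (G.deleteEdges {e i}).Reachable s v).card with hL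
  have hLle : ∀ v, L v ≤ r := fun v => by
    simpa using Finset.card_filter_le Finset.univ
      (fun i : Fin r => ¬ (G.deleteEdges {e i}).Reachable s v)
  have hchar : ∀ (v) (j : Fin r),
      ¬ (G.deleteEdges {e j}).Reachable s v ↔ (j : ℕ) < L v := by
    intro v j
    constructor
    · intro hj
      have hsub : Finset.Iic j ⊆ Finset.univ.filter
          (fun i : Fin r => ¬ (G.deleteEdges {e i}).Reachable s v) := by
        intro i hi
        rw [Finset.mem_Iic] at hi
        rw [Finset.mem_filter]
        exact ⟨Finset.mem_univ _, fun h => hj (emono i j hi v h)⟩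
      have hc := Finset.card_le_card hsub
      rw [Fin.card_Iic] at hc
      simp only [hL]
      omega
    · intro hlt hre
      have hsub : (Finset.univ.filter fun i : Fin r =>
          ¬ (G.deleteEdges {e i}).Reachable s v) ⊆ Finset.Iio j := by
        intro i hi
        rw [Finset.mem_filter] at hi
        rw [Finset.mem_Iio]
        by_contra hji
        push_neg at hji
        exact hi.2 (emono j i hji v hre)
      have hc := Finset.card_le_card hsub
      rw [Fin.card_Iio] at hc
      simp only [hL] at hlt
      omega
  have hLs : L s = 0 := by
    simp only [hL]
    rw [Finset.card_eq_zero, Finset.filter_eq_empty_iff]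
    exact fun i _ => not_not_intro (Reachable.refl _)
  have hLt : L t = r := by
    simp only [hL]
    rw [Finset.filter_true_of_mem (fun i _ => (emem i).2)]
    simp
  have hSne : ∀ (i : Fin r) (f : Sym2 V), f ∉ S → f ≠ e i := by
    intro i f hmem heq
    exact hmem (by rw [heq, hS]; exact ⟨(emem i).1, (emem i).2⟩)
  have hendL : ∀ (i : Fin r) (a b : V), e i = s(a,b) →
      (G.deleteEdges {e i}).Reachable s a → ¬ (G.deleteEdges {e i}).Reachable s b →
      L a = (i : ℕ) ∧ L b = (i : ℕ) + 1 := by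
    intro i a b hi ha hb
    have hadj : G.Adj a b := by rw [← SimpleGraph.mem_edgeSet, ← hi]; exact (emem i).1
    have hside : ∀ j : Fin r, j ≠ i →
        ((G.deleteEdges {e j}).Reachable s a ↔ (G.deleteEdges {e j}).Reachable s b) := by
      intro j hj
      refine Stmt5.side_inv hadj ?_
      rw [← hi]
      exact fun h => hj (einj h).symm
    constructor
    · have h1 : L a ≤ i := by
        by_contra hlt; push_neg at hlt
        exact ((hchar a i).mpr hlt) ha
      have h2 : (i : ℕ) ≤ L a := by
        by_contra hlt; push_neg at hlt
        have hjr : L a < r := lt_trans hlt i.isLt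
        have hj : (⟨L a, hjr⟩ : Fin r) ≠ i := by
          intro h
          have := congrArg Fin.val h
          simp only at this
          omega
        have hnr : ¬ (G.deleteEdges {e ⟨L a, hjr⟩}).Reachable s a := by
          intro h
          have hb' := (hside _ hj).mp h
          exact hb (emono ⟨L a, hjr⟩ i (by simp [Fin.le_def]; omega) b hb')
        have := (hchar a ⟨L a, hjr⟩).mp hnr
        simp only at this
        omega
      omega
    · have h1 : (i : ℕ) + 1 ≤ L b := by
        have := (hchar b i).mp hb; omega
      have h2 : L b ≤ (i : ℕ) + 1 := by
        by_contra hlt; push_neg at hlt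
        have hlt' : (i : ℕ) + 1 < r := lt_of_lt_of_le hlt (hLle b)
        have hj : (⟨(i : ℕ) + 1, hlt'⟩ : Fin r) ≠ i := by
          intro h
          have := congrArg Fin.val h
          simp only at this
          omega
        have hra : (G.deleteEdges {e ⟨(i : ℕ) + 1, hlt'⟩}).Reachable s a :=
          emono i _ (by simp [Fin.le_def]) a ha
        have hrb := (hside _ hj).mp hra
        exact ((hchar b ⟨(i : ℕ) + 1, hlt'⟩).mpr (by simpa using hlt)) hrb
      omega
  have hLadj : ∀ x z : V, G.Adj x z → s(x,z) ∉ S → L x = L z := by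
    intro x z hadj hmem
    simp only [hL]
    congr 1
    apply Finset.filter_congr
    intro i _
    exact not_congr (Stmt5.side_inv hadj (hSne i _ hmem))
  have hLreach : ∀ x z : V, (G.deleteEdges S).Reachable x z → L x = L z := by
    intro x z hxz
    obtain ⟨w⟩ := hxz
    induction w with
    | nil => rfl
    | cons h p ih =>
      rw [SimpleGraph.deleteEdges_adj] at h
      exact (hLadj _ _ h.1 h.2).trans ih
  -- surgery: same sides implies reachable after deleting all bridges
  have hsurg : ∀ (n : ℕ) (x y : V) (w : G.Walk x y), w.length ≤ n →
      (∀ i : Fin r, ((G.deleteEdges {e i}).Reachable s x ↔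
        (G.deleteEdges {e i}).Reachable s y)) → (G.deleteEdges S).Reachable x y := by
    intro n
    induction n with
    | zero =>
      intro x y w hlen _
      cases w with
      | nil => exact Reachable.refl _
      | cons h p => simp [SimpleGraph.Walk.length_cons] at hlen
    | succ n ih =>
      intro x y w hlen hside
      cases w with
      | nil => exact Reachable.refl _
      | @cons _ z _ h p =>
        rw [SimpleGraph.Walk.length_cons] at hlen
        by_cases hmem : s(x, z) ∈ S
        · obtain ⟨i, hi⟩ := esurj _ hmem.1 hmem.2
          have hsplit := Stmt5.endpoint_split hG h hmem.2
          rw [← hi] at hsplit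
          have hzy : ¬ (G.deleteEdges {e i}).Reachable z y := by
            rcases hsplit with ⟨hx, hz⟩ | ⟨hz, hx⟩
            · exact fun hr => hz (((hside i).mp hx).trans hr.symm)
            · exact fun hr => hx ((hside i).mpr (hz.trans hr))
          have hcross := Stmt5.edge_mem_of_cross p hzy
          rw [hi] at hcross
          have hxsup : x ∈ p.support := p.fst_mem_support_of_mem_edges hcross
          refine ih x y (p.dropUntil x hxsup) ?_ hside
          exact le_trans (SimpleGraph.Walk.length_dropUntil_le p hxsup) (by omega)
        · have hadj' : (G.deleteEdges S).Adj x z :=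
            SimpleGraph.deleteEdges_adj.mpr ⟨h, hmem⟩
          have hsidez : ∀ i : Fin r, ((G.deleteEdges {e i}).Reachable s z ↔
              (G.deleteEdges {e i}).Reachable s y) := fun i =>
            (Stmt5.side_inv h (hSne i _ hmem)).symm.trans (hside i)
          exact hadj'.reachable.trans (ih z y p (by omega) hsidez)
  have hcompeq : ∀ x y : V, L x = L y → (G.deleteEdges S).Reachable x y := by
    intro x y hxy
    obtain ⟨w⟩ := hG.preconnected x y
    refine hsurg w.length x y w le_rfl ?_
    intro i
    rw [← not_iff_not, hchar, hchar, hxy]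
  -- choose endpoints of each bridge
  have hABs : ∀ i : Fin r, ∃ a b : V, e i = s(a,b) ∧
      (G.deleteEdges {e i}).Reachable s a ∧ ¬ (G.deleteEdges {e i}).Reachable s b :=
    fun i => Stmt5.exists_endpoint_split hG (emem i).1 (emem i).2
  choose Av Bv hei hAv hBv using hABs
  set rep : Fin (r + 1) → V := Fin.cases s Bv with hrep
  have hrepL : ∀ k : Fin (r + 1), L (rep k) = (k : ℕ) := by
    intro k
    induction k using Fin.cases with
    | zero => simpa [hrep] using hLs
    | succ i =>
      have := (hendL i (Av i) (Bv i) (hei i) (hAv i) (hBv i)).2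
      simpa [hrep] using this
  refine ⟨r, e, fun k => (G.deleteEdges S).connectedComponentMk (rep k),
    einj, emem, esurj, ⟨?_, ?_⟩, ?_, ?_, ?_, ?_⟩
  · -- injective
    intro k k' hkk
    have := hLreach _ _ (SimpleGraph.ConnectedComponent.exact hkk)
    rw [hrepL, hrepL] at this
    exact Fin.ext this
  · -- surjective
    intro c
    obtain ⟨v, rfl⟩ := c.exists_rep
    refine ⟨⟨L v, Nat.lt_succ_of_le (hLle v)⟩, ?_⟩
    exact SimpleGraph.ConnectedComponent.sound (hcompeq _ _ (by rw [hrepL]))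
  · simp [hrep]
  · exact SimpleGraph.ConnectedComponent.sound
      (hcompeq _ _ (by rw [hLt, hrepL, Fin.val_last]))
  · intro i
    refine ⟨Av i, Bv i, hei i, ?_, ?_⟩
    · exact SimpleGraph.ConnectedComponent.sound (hcompeq _ _
        (by rw [(hendL i (Av i) (Bv i) (hei i) (hAv i) (hBv i)).1, hrepL,
          Fin.coe_castSucc]))
    · exact SimpleGraph.ConnectedComponent.sound (hcompeq _ _
        (by rw [(hendL i (Av i) (Bv i) (hei i) (hAv i) (hBv i)).2, hrepL,
          Fin.val_succ]))
  · -- sublist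
    have key : ∀ (n : ℕ) (x : V) (w : G.Walk x t), w.length ≤ n →
        ((List.ofFn e).drop (L x)).Sublist w.edges := by
      intro n
      induction n with
      | zero =>
        intro x w hlen
        cases w with
        | nil =>
          rw [hLt, List.drop_eq_nil_of_le (by simp)]
          exact List.nil_sublist _
        | cons h p => simp [SimpleGraph.Walk.length_cons] at hlen
      | succ n ih =>
        intro x w hlen
        cases w with
        | nil =>
          rw [hLt, List.drop_eq_nil_of_le (by simp)]
          exact List.nil_sublist _
        | @cons _ z _ h p =>
          rw [SimpleGraph.Walk.length_cons] at hlen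
          rw [SimpleGraph.Walk.edges_cons]
          by_cases hmem : s(x, z) ∈ S
          · obtain ⟨i, hi⟩ := esurj _ hmem.1 hmem.2
            have hsplit := Stmt5.endpoint_split hG h hmem.2
            rw [← hi] at hsplit
            rcases hsplit with ⟨hx, hz⟩ | ⟨hz, hx⟩
            · obtain ⟨hLx, hLz⟩ := hendL i x z hi hx hz
              rw [hLx]
              have hdrop : (List.ofFn e).drop (i : ℕ) =
                  s(x, z) :: (List.ofFn e).drop ((i : ℕ) + 1) := by
                rw [List.drop_eq_getElem_cons (by simpa using i.isLt)]
                simp [← hi]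
              rw [hdrop]
              have := ih z p (by omega)
              rw [hLz] at this
              exact List.Sublist.cons₂ _ this
            · obtain ⟨hLz, hLx⟩ := hendL i z x (hi.trans Sym2.eq_swap) hz hx
              rw [hLx]
              have hstep : ((List.ofFn e).drop ((i : ℕ) + 1)).Sublist
                  ((List.ofFn e).drop (i : ℕ)) := by
                have h0 : (List.ofFn e).drop ((i : ℕ) + 1) =
                    ((List.ofFn e).drop (i : ℕ)).drop 1 := by
                  rw [List.drop_drop]
                rw [h0]
                exact List.drop_sublist 1 _
              have := ih z p (by omega)
              rw [hLz] at this
              exact List.Sublist.cons _ (hstep.trans this)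
          · have hLxz := hLadj x z h hmem
            rw [hLxz]
            exact List.Sublist.cons _ (ih z p (by omega))
    intro p
    have := key p.length s p le_rfl
    rwa [hLs, List.drop_zero] at this
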